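/- Let Q be a divisible commutative quantale and a ≤ b ≤ c in Q. Then for every x ≤ c, a ⊗_b (b ⊗_c x) = a ⊗_c x, and both sides equal a ⊗ (c ⧵ x); i.e. the smooth slice construction Q/(−) is functorial in the slicing element. -/
import Mathlib

/-- Residuation in a quantale: `a ⧵ b = sSup {c | a * c ≤ b}`. -/
def res {Q : Type*} [Mul Q] [CompleteLattice Q] (a b : Q) : Q := sSup {c | a * c ≤ b}

/-- The smooth slice multiplication on `[⊥, c]`: `u ⊗_c v = c * (c ⧵ u) * (c ⧵ v)`. -/
def smul {Q : Type*} [Mul Q] [CompleteLattice Q] (c u v : Q) : Q := c * res c u * res c v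

section Aux
variable {Q : Type*} [CommSemigroup Q] [CompleteLattice Q] [IsQuantale Q]

lemma mul_res_le (a b : Q) : a * res a b ≤ b := by
  rw [res, mul_sSup_distrib]
  exact iSup₂_le fun c hc => hc

lemma le_res_mul (a t : Q) : t ≤ res a (a * t) := le_sSup le_rfl

lemma mul_res_eq (hdiv : ∀ a b : Q, a ≤ b → ∃ c, a = b * c)
    {a b : Q} (hab : a ≤ b) : b * res b a = a := by
  refine le_antisymm (mul_res_le b a) ?_
  obtain ⟨d, hd⟩ := hdiv a b hab
  calc a = b * d := hd
    _ ≤ b * res b a := mul_le_mul_right (le_sSup (by simp [Set.mem_setOf_eq, ← hd])) b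

end Aux

/-- In a divisible commutative quantale, for `a ≤ b ≤ c` and `x ≤ c`,
`a ⊗_b (b ⊗_c x) = a ⊗_c x = a * (c ⧵ x)`; the smooth slice construction is functorial. -/
theorem smooth_slice_functorial {Q : Type*} [CommSemigroup Q] [CompleteLattice Q] [IsQuantale Q]
    (hdiv : ∀ a b : Q, a ≤ b → ∃ c, a = b * c)
    {a b c : Q} (hab : a ≤ b) (hbc : b ≤ c) :
    ∀ x : Q, x ≤ c →
      smul b a (smul c b x) = smul c a x ∧ smul c a x = a * res c x := by
  intro x hx
  have hac : a ≤ c := hab.trans hbc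
  have h1 : smul c a x = a * res c x := by
    rw [smul, mul_res_eq hdiv hac]
  refine ⟨?_, h1⟩
  have h2 : smul c b x = b * res c x := by
    rw [smul, mul_res_eq hdiv hbc]
  rw [smul, mul_res_eq hdiv hab, h1, h2]
  set t := res c x
  -- show a * res b (b * t) = a * t
  refine le_antisymm ?_ (mul_le_mul_right (le_res_mul b t) a)
  obtain ⟨d, hd⟩ := hdiv a b hab
  calc a * res b (b * t) = d * (b * res b (b * t)) := by
        rw [hd, mul_comm b d, mul_assoc]
    _ ≤ d * (b * t) := mul_le_mul_right (mul_res_le b (b * t)) d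
    _ = a * t := by rw [hd, mul_comm b d, mul_assoc]
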